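/- Let a, b, c, N be integers with N < 0, and suppose the discriminant Δ := b² − 4ac is positive and is not the square of an integer. Let Q(x,y) := ax² + bxy + cy², and for vectors v = (v₁,v₂), w = (w₁,w₂) let B(v,w) := 2a·v₁w₁ + b·(v₁w₂ + v₂w₁) + 2c·v₂w₂ denote the associated (doubled) bilinear pairing. If there exists (x₀,y₀) ∈ ℤ² with Q(x₀,y₀) = N, then there exists (x₁,y₁) ∈ ℤ² with Q(x₁,y₁) = N, (x₁,y₁) ≠ (x₀,y₀), (x₁,y₁) ≠ (−x₀,−y₀), and B((x₀,y₀),(x₁,y₁)) > 0. -/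
import Mathlib


/-- If a binary quadratic form `Q(x,y) = ax² + bxy + cy²` whose discriminant
`b² - 4ac` is positive and not a square represents a negative number `N` at
`(x₀,y₀)`, then it represents `N` at another point `(x₁,y₁)`, distinct from
`±(x₀,y₀)`, whose pairing `B((x₀,y₀),(x₁,y₁))` with `(x₀,y₀)` is positive. -/
theorem exists_second_representation (a b c N : ℤ) (hN : N < 0)
    (hΔpos : 0 < b ^ 2 - 4 * a * c)
    (hΔnotsq : ¬ ∃ m : ℤ, m ^ 2 = b ^ 2 - 4 * a * c)
    (x₀ y₀ : ℤ) (h₀ : a * x₀ ^ 2 + b * x₀ * y₀ + c * y₀ ^ 2 = N) :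
    ∃ x₁ y₁ : ℤ,
      a * x₁ ^ 2 + b * x₁ * y₁ + c * y₁ ^ 2 = N ∧
      (x₁, y₁) ≠ (x₀, y₀) ∧
      (x₁, y₁) ≠ (-x₀, -y₀) ∧
      0 < 2 * a * x₀ * x₁ + b * (x₀ * y₁ + y₀ * x₁) + 2 * c * y₀ * y₁ := by
  obtain ⟨t', u, htu', hu⟩ := Pell.exists_of_not_isSquare hΔpos
    (fun ⟨r, hr⟩ => hΔnotsq ⟨r, by rw [hr]; ring⟩)
  set t : ℤ := -|t'| with ht
  have htu : t ^ 2 - (b ^ 2 - 4 * a * c) * u ^ 2 = 1 := by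
    rw [ht, neg_pow, sq_abs]; simpa using htu'
  have hu2 : 1 ≤ u ^ 2 := by rcases lt_or_gt_of_ne hu with h | h <;> nlinarith
  have htneg : t < 0 := by
    have h1 : 1 ≤ t' ^ 2 := by nlinarith
    have : 1 ≤ |t'| := by
      rcases abs_cases t' with ⟨h, _⟩ | ⟨h, _⟩ <;> nlinarith [abs_nonneg t']
    omega
  refine ⟨(t - b*u)*x₀ - 2*c*u*y₀, 2*a*u*x₀ + (t + b*u)*y₀, ?_, ?_, ?_, ?_⟩
  · linear_combination (a*x₀^2 + b*x₀*y₀ + c*y₀^2) * htu + h₀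
  · intro h
    rw [Prod.mk.injEq] at h
    obtain ⟨e1, e2⟩ := h
    have hx : (2 - 2*t) * x₀ = 0 := by
      linear_combination (t + b*u - 1) * e1 + 2*c*u * e2 - x₀ * htu
    have hy : (2 - 2*t) * y₀ = 0 := by
      linear_combination (t - b*u - 1) * e2 - 2*a*u * e1 - y₀ * htu
    have hne : (2 - 2*t) ≠ 0 := by omega
    have hx0 : x₀ = 0 := (mul_eq_zero.mp hx).resolve_left hne
    have hy0 : y₀ = 0 := (mul_eq_zero.mp hy).resolve_left hne
    rw [hx0, hy0] at h₀; simp at h₀; omega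
  · intro h
    rw [Prod.mk.injEq] at h
    obtain ⟨e1, e2⟩ := h
    have hx : (2 + 2*t) * x₀ = 0 := by
      linear_combination (t + b*u + 1) * e1 + 2*c*u * e2 - x₀ * htu
    have hy : (2 + 2*t) * y₀ = 0 := by
      linear_combination (t - b*u + 1) * e2 - 2*a*u * e1 - y₀ * htu
    by_cases htm : t = -1
    · rw [htm] at htu
      nlinarith
    · have hne : (2 + 2*t) ≠ 0 := by omega
      have hx0 : x₀ = 0 := (mul_eq_zero.mp hx).resolve_left hne
      have hy0 : y₀ = 0 := (mul_eq_zero.mp hy).resolve_left hne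
      rw [hx0, hy0] at h₀; simp at h₀; omega
  · have key : 2*a*x₀*((t - b*u)*x₀ - 2*c*u*y₀)
        + b*(x₀*(2*a*u*x₀ + (t + b*u)*y₀) + y₀*((t - b*u)*x₀ - 2*c*u*y₀))
        + 2*c*y₀*(2*a*u*x₀ + (t + b*u)*y₀) = 2*t*N := by
      linear_combination 2*t * h₀
    rw [key]
    have := mul_pos_of_neg_of_neg htneg hN
    linarith
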